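/- Let D be a connected graph, J ⊆ D, and f : J → ℤ satisfy the gradually varied extension condition d(x,y) ≥ |f(x) − f(y)| for all x, y ∈ J. Then the pointwise functions F_min(x) = max_{y∈J}(f(y) − d(x,y)) and F_max(x) = min_{y∈J}(f(y) + d(x,y)) are both gradually varied extensions of f, and every gradually varied extension G of f satisfies F_min ≤ G ≤ F_max pointwise. -/

import Mathlib

private lemma walk_abs_le {V : Type*} {G : SimpleGraph V} (G' : V → ℤ)
    (hlip : ∀ a b : V, G.Adj a b → |G' a - G' b| ≤ 1) :
    ∀ {x y : V} (p : G.Walk x y), |G' x - G' y| ≤ (p.length : ℤ) := by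
  intro x y p
  induction p with
  | nil => simp
  | cons h q ih =>
      rename_i u v w
      calc |G' u - G' w| = |(G' u - G' v) + (G' v - G' w)| := by ring_nf
        _ ≤ |G' u - G' v| + |G' v - G' w| := abs_add_le _ _
        _ ≤ 1 + q.length := add_le_add (hlip _ _ h) ih
        _ = ((q.length + 1 : ℕ) : ℤ) := by push_cast; ring
        _ = _ := by simp [SimpleGraph.Walk.length_cons]

private lemma lip_dist {V : Type*} {G : SimpleGraph V} (hG : G.Connected) (G' : V → ℤ)
    (hlip : ∀ a b : V, G.Adj a b → |G' a - G' b| ≤ 1) (x y : V) :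
    |G' x - G' y| ≤ (G.dist x y : ℤ) := by
  obtain ⟨p, hp⟩ := hG.exists_walk_length_eq_dist x y
  calc |G' x - G' y| ≤ (p.length : ℤ) := walk_abs_le G' hlip p
    _ = _ := by rw [hp]

/-- The discrete McShane-Whitney extensions
`F_min x = max_{y∈J}(f y − d x y)` and `F_max x = min_{y∈J}(f y + d x y)`
are gradually varied extensions of `f`, and every gradually varied extension
lies between them. -/
theorem discrete_mcshane_whitney_extremal {V : Type*} [Fintype V]
    (G : SimpleGraph V) (hG : G.Connected) (J : Finset V) (hJ : J.Nonempty)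
    (f : V → ℤ)
    (hf : ∀ x ∈ J, ∀ y ∈ J, |f x - f y| ≤ (G.dist x y : ℤ))
    (Fmin Fmax : V → ℤ)
    (hFmin : ∀ x : V, Fmin x = J.sup' hJ (fun y => f y - (G.dist x y : ℤ)))
    (hFmax : ∀ x : V, Fmax x = J.inf' hJ (fun y => f y + (G.dist x y : ℤ))) :
    ((∀ x ∈ J, Fmin x = f x) ∧ ∀ a b : V, G.Adj a b → |Fmin a - Fmin b| ≤ 1) ∧
    ((∀ x ∈ J, Fmax x = f x) ∧ ∀ a b : V, G.Adj a b → |Fmax a - Fmax b| ≤ 1) ∧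
    (∀ G' : V → ℤ, (∀ x ∈ J, G' x = f x) →
      (∀ a b : V, G.Adj a b → |G' a - G' b| ≤ 1) →
      ∀ x : V, Fmin x ≤ G' x ∧ G' x ≤ Fmax x) := by
  have htri : ∀ a b c : V, (G.dist a c : ℤ) ≤ G.dist a b + G.dist b c := by
    intro a b c
    exact_mod_cast hG.dist_triangle (u := a) (v := b) (w := c)
  have hcomm : ∀ a b : V, (G.dist a b : ℤ) = G.dist b a := by
    intro a b
    norm_cast
    exact SimpleGraph.dist_comm
  have hadj : ∀ a b : V, G.Adj a b → (G.dist a b : ℤ) ≤ 1 := by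
    intro a b h
    exact_mod_cast SimpleGraph.dist_le (h.toWalk)
  refine ⟨⟨?_, ?_⟩, ⟨?_, ?_⟩, ?_⟩
  · intro x hx
    rw [hFmin x]
    apply le_antisymm
    · apply Finset.sup'_le
      intro y hy
      have h1 : f y - f x ≤ (G.dist y x : ℤ) := (abs_le.mp (hf y hy x hx)).2
      have h2 := hcomm x y
      linarith
    · have := Finset.le_sup' (fun y => f y - (G.dist x y : ℤ)) hx
      simp only [SimpleGraph.dist_self, Nat.cast_zero, sub_zero, add_zero] at this
      exact this
  · intro a b hab
    rw [hFmin a, hFmin b, abs_le]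
    have key : ∀ c d : V, G.Adj c d →
        J.sup' hJ (fun y => f y - (G.dist c y : ℤ)) ≤
        J.sup' hJ (fun y => f y - (G.dist d y : ℤ)) + 1 := by
      intro c d hcd
      apply Finset.sup'_le
      intro y hy
      have h1 := htri d c y
      have h2 := hadj d c hcd.symm
      have h3 := Finset.le_sup' (fun y => f y - (G.dist d y : ℤ)) hy
      linarith
    have k1 := key a b hab
    have k2 := key b a hab.symm
    constructor <;> linarith
  · intro x hx
    rw [hFmax x]
    apply le_antisymm
    · have := Finset.inf'_le (fun y => f y + (G.dist x y : ℤ)) hx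
      simp only [SimpleGraph.dist_self, Nat.cast_zero, sub_zero, add_zero] at this
      exact this
    · apply Finset.le_inf'
      intro y hy
      have h1 : f x - f y ≤ (G.dist x y : ℤ) := (abs_le.mp (hf x hx y hy)).2
      linarith
  · intro a b hab
    rw [hFmax a, hFmax b, abs_le]
    have key : ∀ c d : V, G.Adj c d →
        J.inf' hJ (fun y => f y + (G.dist c y : ℤ)) - 1 ≤
        J.inf' hJ (fun y => f y + (G.dist d y : ℤ)) := by
      intro c d hcd
      apply Finset.le_inf'
      intro y hy
      have h1 := htri c d y
      have h2 := hadj c d hcd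
      have h3 := Finset.inf'_le (fun y => f y + (G.dist c y : ℤ)) hy
      linarith
    have k1 := key a b hab
    have k2 := key b a hab.symm
    constructor <;> linarith
  · intro G' hext hlip x
    have hd := lip_dist hG G' hlip
    constructor
    · rw [hFmin x]
      apply Finset.sup'_le
      intro y hy
      have h3 : G' y - G' x ≤ (G.dist y x : ℤ) := (abs_le.mp (hd y x)).2
      rw [hext y hy] at h3
      have h2 := hcomm x y
      linarith
    · rw [hFmax x]
      apply Finset.le_inf'
      intro y hy
      have h3 : G' x - G' y ≤ (G.dist x y : ℤ) := (abs_le.mp (hd x y)).2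
      rw [hext y hy] at h3
      linarith
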